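/- arXiv:2602.08120 — 2 statements merged into one kernel-verified Lean document; each statement's English description precedes it below -/
import Mathlib

section
/- If X_1, ..., X_n are independent real random variables with mean zero and p ∈ [1, 2], then E[|X_1 + ... + X_n|^p] ≤ 2 · Σ_{i=1}^n E[|X_i|^p] (von Bahr–Esseen inequality with constant 2). -/
open MeasureTheory ProbabilityTheory Finset

-- AM-GM instance: x^p ≤ (2-p)x + (p-1)x² for x ≥ 0, 1 ≤ p ≤ 2
lemma vbe_interp {p : ℝ} (hp1 : 1 ≤ p) (hp2 : p ≤ 2) {x : ℝ} (hx : 0 ≤ x) :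
    x ^ p ≤ (2 - p) * x + (p - 1) * x ^ (2:ℕ) := by
  rcases eq_or_lt_of_le hx with h0 | h0
  · rw [← h0]
    rw [Real.zero_rpow (by linarith)]
    nlinarith
  · have h := Real.geom_mean_le_arith_mean2_weighted (by linarith : (0:ℝ) ≤ 2 - p)
      (by linarith : (0:ℝ) ≤ p - 1) hx (by positivity : (0:ℝ) ≤ x ^ (2:ℕ)) (by ring)
    calc x ^ p = x ^ (2 - p) * (x ^ (2:ℕ)) ^ (p - 1) := by
          rw [← Real.rpow_natCast x 2, ← Real.rpow_mul hx, ← Real.rpow_add h0]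
          congr 1; ring
      _ ≤ (2 - p) * x + (p - 1) * x ^ (2:ℕ) := h

-- key: (1+t)^p ≤ 1 + p t + (p-1) t² for t ≥ -1
lemma vbe_key {p : ℝ} (hp1 : 1 ≤ p) (hp2 : p ≤ 2) {t : ℝ} (ht : -1 ≤ t) :
    (1 + t) ^ p ≤ 1 + p * t + (p - 1) * t ^ (2:ℕ) := by
  have := vbe_interp hp1 hp2 (by linarith : (0:ℝ) ≤ 1 + t)
  nlinarith [this]

-- Lemma A: |1+t|^p ≤ 1 + p t + 2 |t|^p
lemma vbe_unit {p : ℝ} (hp1 : 1 ≤ p) (hp2 : p ≤ 2) (t : ℝ) :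
    |1 + t| ^ p ≤ 1 + p * t + 2 * |t| ^ p := by
  have habs : (0:ℝ) ≤ |t| ^ p := Real.rpow_nonneg (abs_nonneg t) p
  rcases le_or_gt (|t|) 1 with hle | hgt
  · -- |t| ≤ 1
    have ht1 : -1 ≤ t := (abs_le.1 hle).1
    have ht2 : t ≤ 1 := (abs_le.1 hle).2
    rw [abs_of_nonneg (by linarith : (0:ℝ) ≤ 1 + t)]
    have hk := vbe_key hp1 hp2 ht1
    have hsq : (p - 1) * t ^ (2:ℕ) ≤ 2 * |t| ^ p := by
      rcases eq_or_ne t 0 with rfl | ht0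
      · simp [Real.zero_rpow (by linarith : p ≠ 0)]
      · have h1 : t ^ (2:ℕ) = |t| ^ ((2:ℕ):ℝ) := by
          rw [Real.rpow_natCast, sq_abs]
        have h2 : |t| ^ ((2:ℕ):ℝ) ≤ |t| ^ p :=
          Real.rpow_le_rpow_of_exponent_ge (abs_pos.2 ht0) hle (by norm_num; linarith)
        have h3 : (p - 1) ≤ 2 := by linarith
        nlinarith [Real.rpow_nonneg (abs_nonneg t) ((2:ℕ):ℝ)]
    linarith
  · rcases le_or_gt 0 t with htpos | htneg
    · -- t ≥ 1
      rw [abs_of_nonneg htpos] at hgt habs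
      have ht1 : 1 ≤ t := hgt.le
      have ht0 : 0 < t := by linarith
      have htp : (0:ℝ) ≤ t ^ p := Real.rpow_nonneg ht0.le p
      have e1 : t ^ p / t ≤ t := by
        have h1 : t ^ p / t = t ^ (p - 1) := by
          rw [Real.rpow_sub ht0, Real.rpow_one]
        rw [h1]
        calc t ^ (p - 1) ≤ t ^ (1:ℝ) :=
              Real.rpow_le_rpow_of_exponent_le ht1 (by linarith)
          _ = t := Real.rpow_one t
      have e2 : t ^ p / t ^ (2:ℕ) ≤ 1 := by
        have h1 : t ^ p / t ^ (2:ℕ) = t ^ (p - 2) := by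
          rw [Real.rpow_sub ht0, ← Real.rpow_natCast t 2]
          norm_num
        rw [h1]
        exact Real.rpow_le_one_of_one_le_of_nonpos ht1 (by linarith)
      rw [abs_of_nonneg (by linarith : (0:ℝ) ≤ 1 + t), abs_of_nonneg htpos]
      have hcalc : (1 + t) ^ p ≤ t ^ p + p * (t ^ p / t) + (p - 1) * (t ^ p / t ^ (2:ℕ)) := by
        have h1t : 1 + t = t * (1 + 1 / t) := by
          field_simp
          ring
        calc (1 + t) ^ p = (t * (1 + 1 / t)) ^ p := by rw [← h1t]
          _ = t ^ p * (1 + 1 / t) ^ p := Real.mul_rpow ht0.le (by positivity)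
          _ ≤ t ^ p * (1 + p * (1 / t) + (p - 1) * (1 / t) ^ (2:ℕ)) := by
              refine mul_le_mul_of_nonneg_left ?_ htp
              refine vbe_key hp1 hp2 ?_
              have h : (0:ℝ) ≤ 1 / t := by positivity
              linarith
          _ = t ^ p + p * (t ^ p / t) + (p - 1) * (t ^ p / t ^ (2:ℕ)) := by ring
      have f1 : p * (t ^ p / t) ≤ p * t := mul_le_mul_of_nonneg_left e1 (by linarith)
      have f2 : (p - 1) * (t ^ p / t ^ (2:ℕ)) ≤ (p - 1) * 1 :=
        mul_le_mul_of_nonneg_left e2 (by linarith)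
      linarith [hcalc, f1, f2, htp]
    · -- t ≤ -1
      rw [abs_of_neg htneg] at hgt habs
      have hb := one_add_mul_self_le_rpow_one_add (s := -t - 1) (by linarith) hp1
      rw [show (1:ℝ) + (-t - 1) = -t by ring] at hb
      have hmono : (-(1 + t)) ^ p ≤ (-t) ^ p :=
        Real.rpow_le_rpow (by linarith) (by linarith) (by linarith)
      rw [abs_of_neg (by linarith : 1 + t < 0), abs_of_neg htneg]
      linarith

-- positive-x case of the pointwise inequality
lemma vbe_pointwise_pos {p : ℝ} (hp1 : 1 ≤ p) (hp2 : p ≤ 2) {x : ℝ} (hx : 0 < x) (y : ℝ) :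
    |x + y| ^ p ≤ x ^ p + (p * x ^ (p - 1)) * y + 2 * |y| ^ p := by
  have h := vbe_unit hp1 hp2 (y / x)
  have hxp : (0:ℝ) ≤ x ^ p := Real.rpow_nonneg hx.le p
  have hxy : x * (1 + y / x) = x + y := by field_simp
  have e0 : |x + y| = x * |1 + y / x| := by
    rw [← hxy, abs_mul, abs_of_pos hx]
  have e1 : |x + y| ^ p = x ^ p * |1 + y / x| ^ p := by
    rw [e0, Real.mul_rpow hx.le (abs_nonneg _)]
  have e2 : x ^ p * (y / x) = x ^ (p - 1) * y := by
    rw [Real.rpow_sub hx, Real.rpow_one]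
    field_simp
  have e3 : x ^ p * |y / x| ^ p = |y| ^ p := by
    rw [← Real.mul_rpow hx.le (abs_nonneg _), abs_div, abs_of_pos hx]
    congr 1
    field_simp
  have h4 : x ^ p * |1 + y / x| ^ p ≤ x ^ p * (1 + p * (y / x) + 2 * |y / x| ^ p) :=
    mul_le_mul_of_nonneg_left h hxp
  calc |x + y| ^ p = x ^ p * |1 + y / x| ^ p := e1
    _ ≤ x ^ p * (1 + p * (y / x) + 2 * |y / x| ^ p) := h4
    _ = x ^ p + p * (x ^ p * (y / x)) + 2 * (x ^ p * |y / x| ^ p) := by ring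
    _ = x ^ p + (p * x ^ (p - 1)) * y + 2 * |y| ^ p := by rw [e2, e3]; ring

-- full pointwise inequality
lemma vbe_pointwise {p : ℝ} (hp1 : 1 ≤ p) (hp2 : p ≤ 2) (x y : ℝ) :
    |x + y| ^ p ≤ |x| ^ p + (p * (Real.sign x * |x| ^ (p - 1))) * y + 2 * |y| ^ p := by
  rcases lt_trichotomy x 0 with hx | hx | hx
  · have h := vbe_pointwise_pos hp1 hp2 (x := -x) (by linarith) (-y)
    rw [show -x + -y = -(x + y) by ring, abs_neg, abs_neg] at h
    rw [Real.sign_of_neg hx, abs_of_neg hx]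
    calc |x + y| ^ p ≤ (-x) ^ p + (p * (-x) ^ (p - 1)) * (-y) + 2 * |y| ^ p := h
      _ = (-x) ^ p + (p * (-1 * (-x) ^ (p - 1))) * y + 2 * |y| ^ p := by ring
  · subst hx
    simp only [Real.sign_zero, zero_mul, mul_zero, zero_add, abs_zero]
    rw [Real.zero_rpow (by linarith : p ≠ 0)]
    have : (0:ℝ) ≤ |y| ^ p := Real.rpow_nonneg (abs_nonneg y) p
    linarith
  · have h := vbe_pointwise_pos hp1 hp2 hx y
    rw [Real.sign_of_pos hx, abs_of_pos hx]
    calc |x + y| ^ p ≤ x ^ p + (p * x ^ (p - 1)) * y + 2 * |y| ^ p := h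
      _ = x ^ p + (p * (1 * x ^ (p - 1))) * y + 2 * |y| ^ p := by ring

lemma vbe_sign_measurable : Measurable Real.sign := by
  have : Real.sign = fun r : ℝ => if r < 0 then (-1:ℝ) else if 0 < r then 1 else 0 :=
    funext fun r => rfl
  rw [this]
  refine Measurable.ite ?_ measurable_const (Measurable.ite ?_ measurable_const measurable_const)
  · exact measurableSet_lt measurable_id measurable_const
  · exact measurableSet_lt measurable_const measurable_id

lemma vbe_step {Ω : Type*} [MeasurableSpace Ω] (μ : Measure Ω) [IsProbabilityMeasure μ]
    {S Y : Ω → ℝ} (hSm : Measurable S) (hYm : Measurable Y)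
    (hindep : IndepFun S Y μ) (hmean : ∫ ω, Y ω ∂μ = 0)
    {p : ℝ} (hp1 : 1 ≤ p) (hp2 : p ≤ 2)
    (hS : MemLp S (ENNReal.ofReal p) μ) (hY : MemLp Y (ENNReal.ofReal p) μ) :
    ∫ ω, |S ω + Y ω| ^ p ∂μ ≤ ∫ ω, |S ω| ^ p ∂μ + 2 * ∫ ω, |Y ω| ^ p ∂μ := by
  have hp0 : (0:ℝ) < p := by linarith
  have hpne : ENNReal.ofReal p ≠ 0 := by
    simp [ENNReal.ofReal_eq_zero, not_le, hp0]
  have hptop : ENNReal.ofReal p ≠ ⊤ := ENNReal.ofReal_ne_top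
  have htoReal : (ENNReal.ofReal p).toReal = p := ENNReal.toReal_ofReal hp0.le
  -- integrability of |·|^p for S, Y, S+Y
  have hintS : Integrable (fun ω => |S ω| ^ p) μ := by
    have := hS.integrable_norm_rpow hpne hptop
    simpa [htoReal, Real.norm_eq_abs] using this
  have hintY : Integrable (fun ω => |Y ω| ^ p) μ := by
    have := hY.integrable_norm_rpow hpne hptop
    simpa [htoReal, Real.norm_eq_abs] using this
  have hintSY : Integrable (fun ω => |S ω + Y ω| ^ p) μ := by
    have := (hS.add hY).integrable_norm_rpow hpne hptop
    simpa [htoReal, Real.norm_eq_abs] using this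
  -- the function f
  set f : ℝ → ℝ := fun x => Real.sign x * |x| ^ (p - 1) with hf
  have hfm : Measurable f :=
    vbe_sign_measurable.mul ((measurable_id.abs).pow_const _)
  -- bound for f
  have hfbound : ∀ x : ℝ, |f x| ≤ 1 + |x| ^ p := by
    intro x
    have h1 : |f x| ≤ |x| ^ (p - 1) := by
      rw [hf]
      simp only [abs_mul]
      have hs : |Real.sign x| ≤ 1 := by
        rcases lt_trichotomy x 0 with h | h | h
        · simp [Real.sign_of_neg h]
        · simp [h]
        · simp [Real.sign_of_pos h]
      have h2 : |(|x| ^ (p - 1))| = |x| ^ (p - 1) :=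
        abs_of_nonneg (Real.rpow_nonneg (abs_nonneg x) _)
      rw [h2]
      calc |Real.sign x| * |x| ^ (p - 1) ≤ 1 * |x| ^ (p - 1) :=
            mul_le_mul_of_nonneg_right hs (Real.rpow_nonneg (abs_nonneg x) _)
        _ = |x| ^ (p - 1) := one_mul _
    have h3 : |x| ^ (p - 1) ≤ 1 + |x| ^ p := by
      rcases le_or_gt (|x|) 1 with hle | hgt
      · have := Real.rpow_le_one (abs_nonneg x) hle (by linarith : (0:ℝ) ≤ p - 1)
        have h4 : (0:ℝ) ≤ |x| ^ p := Real.rpow_nonneg (abs_nonneg x) p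
        linarith
      · have := Real.rpow_le_rpow_of_exponent_le hgt.le (by linarith : p - 1 ≤ p)
        linarith
    linarith
  -- integrability of f ∘ S
  have hfS_int : Integrable (fun ω => f (S ω)) μ := by
    refine Integrable.mono' (g := fun ω => 1 + |S ω| ^ p)
      ((integrable_const 1).add hintS) ((hfm.comp hSm).aestronglyMeasurable) ?_
    filter_upwards with ω
    simpa [Real.norm_eq_abs] using hfbound (S ω)
  have hY_int : Integrable Y μ := hY.integrable (ENNReal.one_le_ofReal.2 hp1)
  -- cross term
  have hindep' : IndepFun (fun ω => f (S ω)) Y μ := hindep.comp hfm measurable_id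
  have hcross_int : Integrable (fun ω => f (S ω) * Y ω) μ := by
    have := hindep'.integrable_mul hfS_int hY_int
    exact this
  have hcross : ∫ ω, f (S ω) * Y ω ∂μ = 0 := by
    have := hindep'.integral_fun_mul_eq_mul_integral hfS_int.aestronglyMeasurable hY_int.aestronglyMeasurable
    calc ∫ ω, f (S ω) * Y ω ∂μ = (∫ ω, f (S ω) ∂μ) * ∫ ω, Y ω ∂μ := this
      _ = 0 := by rw [hmean, mul_zero]
  -- pointwise inequality and conclusion
  have hpt : ∀ ω, |S ω + Y ω| ^ p ≤
      |S ω| ^ p + p * (f (S ω) * Y ω) + 2 * |Y ω| ^ p := by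
    intro ω
    have := vbe_pointwise hp1 hp2 (S ω) (Y ω)
    calc |S ω + Y ω| ^ p
        ≤ |S ω| ^ p + (p * (Real.sign (S ω) * |S ω| ^ (p - 1))) * Y ω + 2 * |Y ω| ^ p := this
      _ = |S ω| ^ p + p * (f (S ω) * Y ω) + 2 * |Y ω| ^ p := by rw [hf]; ring
  have hrhs_int : Integrable
      (fun ω => |S ω| ^ p + p * (f (S ω) * Y ω) + 2 * |Y ω| ^ p) μ :=
    (hintS.add (hcross_int.const_mul p)).add (hintY.const_mul 2)
  calc ∫ ω, |S ω + Y ω| ^ p ∂μ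
      ≤ ∫ ω, (|S ω| ^ p + p * (f (S ω) * Y ω) + 2 * |Y ω| ^ p) ∂μ :=
        integral_mono hintSY hrhs_int hpt
    _ = (∫ ω, (|S ω| ^ p + p * (f (S ω) * Y ω)) ∂μ) + ∫ ω, 2 * |Y ω| ^ p ∂μ :=
        integral_add (hintS.add (hcross_int.const_mul p)) (hintY.const_mul 2)
    _ = ((∫ ω, |S ω| ^ p ∂μ) + ∫ ω, p * (f (S ω) * Y ω) ∂μ) + ∫ ω, 2 * |Y ω| ^ p ∂μ := by
        rw [integral_add hintS (hcross_int.const_mul p)]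
    _ = ∫ ω, |S ω| ^ p ∂μ + 2 * ∫ ω, |Y ω| ^ p ∂μ := by
        rw [integral_const_mul, integral_const_mul, hcross]; ring

lemma vbe_iIndepFun_congr {Ω ι : Type*} [Countable ι] [MeasurableSpace Ω] {μ : Measure Ω}
    {f g : ι → Ω → ℝ} (h : iIndepFun f μ)
    (hfg : ∀ i, f i =ᵐ[μ] g i) : iIndepFun g μ := by
  rw [iIndepFun_iff_measure_inter_preimage_eq_mul] at h ⊢
  intro S sets hsets
  have hae : ∀ᵐ ω ∂μ, ∀ i, f i ω = g i ω := ae_all_iff.2 hfg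
  have h1 : ∀ i : ι, μ (g i ⁻¹' sets i) = μ (f i ⁻¹' sets i) := by
    intro i
    refine measure_congr ?_
    filter_upwards [hfg i] with ω hω
    change (g i ω ∈ sets i) = (f i ω ∈ sets i)
    rw [hω]
  have h2 : μ (⋂ i ∈ S, g i ⁻¹' sets i) = μ (⋂ i ∈ S, f i ⁻¹' sets i) := by
    refine measure_congr ?_
    filter_upwards [hae] with ω hω
    change (ω ∈ ⋂ i ∈ S, g i ⁻¹' sets i) = (ω ∈ ⋂ i ∈ S, f i ⁻¹' sets i)
    simp only [Set.mem_iInter, Set.mem_preimage, eq_iff_iff]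
    constructor <;> intro hh i hi
    · rw [hω i]; exact hh i hi
    · rw [← hω i]; exact hh i hi
  rw [h2, h S hsets]
  exact Finset.prod_congr rfl fun i _ => (h1 i).symm

lemma vbe_aux {Ω : Type*} [MeasurableSpace Ω] (μ : Measure Ω) [IsProbabilityMeasure μ]
    {n : ℕ} {X : Fin n → Ω → ℝ} (hmeas : ∀ i, Measurable (X i))
    (hindep : iIndepFun X μ)
    (hmean : ∀ i, ∫ ω, X i ω ∂μ = 0)
    {p : ℝ} (hp1 : 1 ≤ p) (hp2 : p ≤ 2)
    (hX : ∀ i, MemLp (X i) (ENNReal.ofReal p) μ) (s : Finset (Fin n)) :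
    ∫ ω, |∑ i ∈ s, X i ω| ^ p ∂μ ≤ 2 * ∑ i ∈ s, ∫ ω, |X i ω| ^ p ∂μ := by
  induction s using Finset.cons_induction with
  | empty => simp [Real.zero_rpow (by linarith : p ≠ 0)]
  | cons j s hj ih =>
    have hfun : (∑ i ∈ s, X i) = (fun ω => ∑ i ∈ s, X i ω) := by
      funext ω; simp
    have hS : MemLp (fun ω => ∑ i ∈ s, X i ω) (ENNReal.ofReal p) μ := by
      have := memLp_finset_sum' (μ := μ) s (fun i (_ : i ∈ s) => hX i)
      rwa [hfun] at this
    have hSm : Measurable (fun ω => ∑ i ∈ s, X i ω) :=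
      Finset.measurable_sum s fun i _ => hmeas i
    have hindepSY : IndepFun (fun ω => ∑ i ∈ s, X i ω) (X j) μ := by
      have := hindep.indepFun_finsetSum_of_notMem hmeas hj
      rwa [hfun] at this
    have hstep := vbe_step μ hSm (hmeas j) hindepSY (hmean j) hp1 hp2 hS (hX j)
    have hnonneg : (0:ℝ) ≤ ∫ ω, |X j ω| ^ p ∂μ :=
      integral_nonneg fun ω => Real.rpow_nonneg (abs_nonneg _) p
    calc ∫ ω, |∑ i ∈ Finset.cons j s hj, X i ω| ^ p ∂μ
        = ∫ ω, |(∑ i ∈ s, X i ω) + X j ω| ^ p ∂μ := by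
          congr 1
          funext ω
          rw [Finset.sum_cons, add_comm]
      _ ≤ (∫ ω, |∑ i ∈ s, X i ω| ^ p ∂μ) + 2 * ∫ ω, |X j ω| ^ p ∂μ := hstep
      _ ≤ 2 * ∑ i ∈ s, (∫ ω, |X i ω| ^ p ∂μ) + 2 * ∫ ω, |X j ω| ^ p ∂μ := by linarith
      _ = 2 * ∑ i ∈ Finset.cons j s hj, ∫ ω, |X i ω| ^ p ∂μ := by
          rw [Finset.sum_cons]; ring

/-- von Bahr–Esseen inequality with constant 2: if `X 1, ..., X n` are independent real random
variables with mean zero and `p ∈ [1,2]`, then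
`E[|X_1 + ... + X_n|^p] ≤ 2 * ∑ i, E[|X_i|^p]`. -/
theorem von_bahr_esseen {Ω : Type*} [MeasurableSpace Ω] (μ : Measure Ω)
    [IsProbabilityMeasure μ] (n : ℕ) (X : Fin n → Ω → ℝ)
    (hindep : iIndepFun X μ)
    (hmean : ∀ i, ∫ ω, X i ω ∂μ = 0)
    (p : ℝ) (hp1 : 1 ≤ p) (hp2 : p ≤ 2)
    (hX : ∀ i, MemLp (X i) (ENNReal.ofReal p) μ) :
    ∫ ω, |∑ i, X i ω| ^ p ∂μ ≤ 2 * ∑ i, ∫ ω, |X i ω| ^ p ∂μ := by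
  -- replace X by measurable versions
  set Y : Fin n → Ω → ℝ := fun i => (hX i).1.mk (X i) with hY
  have heq : ∀ i, X i =ᵐ[μ] Y i := fun i => (hX i).1.ae_eq_mk
  have hmeasY : ∀ i, Measurable (Y i) := fun i =>
    (hX i).1.stronglyMeasurable_mk.measurable
  have hindepY : iIndepFun Y μ :=
    vbe_iIndepFun_congr hindep heq
  have hmeanY : ∀ i, ∫ ω, Y i ω ∂μ = 0 := fun i => by
    rw [← integral_congr_ae (heq i)]; exact hmean i
  have hXY : ∀ i, MemLp (Y i) (ENNReal.ofReal p) μ := fun i =>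
    (hX i).ae_eq (heq i)
  have haux := vbe_aux μ hmeasY hindepY hmeanY hp1 hp2 hXY Finset.univ
  have hall : ∀ᵐ ω ∂μ, ∀ i, X i ω = Y i ω := ae_all_iff.2 heq
  have h1 : ∫ ω, |∑ i, X i ω| ^ p ∂μ = ∫ ω, |∑ i, Y i ω| ^ p ∂μ := by
    refine integral_congr_ae ?_
    filter_upwards [hall] with ω hω
    congr 1
    rw [abs_eq_abs]
    left
    exact Finset.sum_congr rfl fun i _ => hω i
  have h2 : ∀ i, ∫ ω, |X i ω| ^ p ∂μ = ∫ ω, |Y i ω| ^ p ∂μ := fun i => by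
    refine integral_congr_ae ?_
    filter_upwards [heq i] with ω hω
    rw [hω]
  rw [h1]
  calc ∫ ω, |∑ i, Y i ω| ^ p ∂μ ≤ 2 * ∑ i, ∫ ω, |Y i ω| ^ p ∂μ := haux
    _ = 2 * ∑ i, ∫ ω, |X i ω| ^ p ∂μ := by
        congr 1
        exact Finset.sum_congr rfl fun i _ => (h2 i).symm
end

section
/- Let C : (0,1) → ℝ_{≥0} satisfy, for constants K, L ≥ 1, q ∈ ℕ, and for all ε ∈ (0, 1/2): C(ε) ≤ K · Σ_{n=0}^{B} (2^{−n/2}·B/ε)·log(B/ε) · [C(2^{−n/2}) + C(2^{−(n−1)/2})], where B = 2·log₂(L/ε), and suppose C(η) ≤ K·η^{−1}·log^{1+3q}(η^{−1} + 2) for all η ∈ (0,1). Then there exists a constant K' such that C'(ε) := the right-hand side satisfies C'(ε) ≤ K'·ε^{−1}·log^{3(q+1)+1}(ε^{−1} + 2) for all ε ∈ (0, 1/2). -/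
open Real Finset

/-- Cost recursion of the deterministic-level quantum MLMC algorithm: if
`C η ≤ K·η⁻¹·log^(1+3q)(η⁻¹+2)`, then the right-hand side of the cost recursion,
`K·∑_{n=0}^{B} (2^(-n/2)·B/ε)·log(B/ε)·[C(2^(-n/2)) + C(2^(-(n-1)/2))]` with
`B = 2·log₂(L/ε)`, is at most `K'·ε⁻¹·log^(3(q+1)+1)(ε⁻¹+2)` for some constant `K'`. -/
theorem cost_recursion (K L : ℝ) (hK : 1 ≤ K) (hL : 1 ≤ L) (q : ℕ)
    (C : ℝ → ℝ) (hC0 : ∀ η, 0 ≤ C η)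
    (hC : ∀ η : ℝ, 0 < η → C η ≤ K * η⁻¹ * (Real.log (η⁻¹ + 2)) ^ (1 + 3 * q)) :
    ∃ K' : ℝ, ∀ ε ∈ Set.Ioo (0 : ℝ) (1 / 2), ∀ B : ℝ, B = 2 * Real.logb 2 (L / ε) →
      K * ∑ n ∈ Finset.range (⌊B⌋₊ + 1),
          ((2 : ℝ) ^ (-(n : ℝ) / 2) * B / ε) * Real.log (B / ε) *
            (C ((2 : ℝ) ^ (-(n : ℝ) / 2)) + C ((2 : ℝ) ^ (-((n : ℝ) - 1) / 2))) ≤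
        K' * ε⁻¹ * (Real.log (ε⁻¹ + 2)) ^ (3 * (q + 1) + 1) := by
  have hlog2 : (0 : ℝ) < Real.log 2 := Real.log_pos (by norm_num)
  have hlog2le : Real.log 2 ≤ 1 := by
    have := Real.log_le_sub_one_of_pos (by norm_num : (0:ℝ) < 2)
    linarith
  have hlogL : (0 : ℝ) ≤ Real.log L := Real.log_nonneg hL
  set c₁ : ℝ := (2 / Real.log 2) * (Real.log L + 1) with hc₁def
  have hc₁pos : 0 < c₁ := by positivity
  set c₂ : ℝ := c₁ + 2 with hc₂def
  have hc₂pos : 0 < c₂ := by positivity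
  refine ⟨2 * K ^ 2 * c₁ * (c₁ + 1) ^ 2 * c₂ ^ (1 + 3 * q), ?_⟩
  rintro ε ⟨hε0, hε2⟩ B hB
  set Lp : ℝ := Real.log (ε⁻¹ + 2) with hLp
  have hεinv : 2 < ε⁻¹ := by
    rw [lt_inv_comm₀ (by norm_num) hε0]; linarith
  have hLp1 : 1 ≤ Lp := by
    rw [hLp, ← Real.log_exp 1]
    apply Real.log_le_log (Real.exp_pos 1)
    have := Real.exp_one_lt_d9
    linarith
  have hLp0 : 0 < Lp := lt_of_lt_of_le one_pos hLp1
  have hlogε : Real.log ε⁻¹ ≤ Lp := Real.log_le_log (by positivity) (by linarith)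
  have hlogεpos : 0 < Real.log ε⁻¹ := Real.log_pos (by linarith)
  -- rewrite B
  have hBval : B = (2 / Real.log 2) * (Real.log L + Real.log ε⁻¹) := by
    rw [hB, Real.logb, Real.log_div (by positivity) (ne_of_gt hε0), Real.log_inv]
    ring
  have hBpos : 0 < B := by
    rw [hBval]; positivity
  have hB2 : 2 < B := by
    rw [hBval]
    have h2 : Real.log 2 < Real.log ε⁻¹ := Real.log_lt_log (by norm_num) hεinv
    rw [div_mul_eq_mul_div, lt_div_iff₀ hlog2]
    nlinarith
  have hBle : B ≤ c₁ * Lp := by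
    rw [hBval, hc₁def]
    have h1 : Real.log L ≤ Real.log L * Lp := le_mul_of_one_le_right hlogL hLp1
    have h2 : (0:ℝ) < 2 / Real.log 2 := by positivity
    calc (2 / Real.log 2) * (Real.log L + Real.log ε⁻¹)
        ≤ (2 / Real.log 2) * (Real.log L * Lp + Lp) := by
          apply mul_le_mul_of_nonneg_left _ h2.le
          linarith
      _ = (2 / Real.log 2) * (Real.log L + 1) * Lp := by ring
  have hlogBε : Real.log (B / ε) ≤ (c₁ + 1) * Lp := by
    rw [Real.log_div (ne_of_gt hBpos) (ne_of_gt hε0)]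
    have h1 : Real.log B ≤ B := by
      have := Real.log_le_sub_one_of_pos hBpos; linarith
    have h2 : -Real.log ε ≤ Lp := by rw [← Real.log_inv]; exact hlogε
    nlinarith
  have hlogBεpos : 0 < Real.log (B / ε) := by
    apply Real.log_pos
    rw [lt_div_iff₀ hε0]
    nlinarith
  -- bound on log(2^(x/2)+2) for x ≤ B
  have hlog_arg : ∀ x : ℝ, x ≤ B → Real.log ((2:ℝ) ^ (x / 2) + 2) ≤ c₂ * Lp := by
    intro x hx
    have hx1 : (2:ℝ) ^ (x / 2) ≤ (2:ℝ) ^ (B / 2) :=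
      Real.rpow_le_rpow_of_exponent_le (by norm_num) (by linarith)
    have hx2 : (1:ℝ) ≤ (2:ℝ) ^ (B / 2) := by
      calc (1:ℝ) = (2:ℝ) ^ (0:ℝ) := (Real.rpow_zero 2).symm
        _ ≤ (2:ℝ) ^ (B / 2) :=
          Real.rpow_le_rpow_of_exponent_le (by norm_num) (by linarith)
    have hx3 : (2:ℝ) ^ (x / 2) + 2 ≤ (2:ℝ) ^ (B / 2 + 2) := by
      rw [Real.rpow_add (by norm_num)]
      have : (2:ℝ) ^ (2:ℝ) = 4 := by
        rw [show (2:ℝ) = ((2:ℕ):ℝ) from by norm_num, Real.rpow_natCast]; norm_num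
      rw [this]
      nlinarith
    calc Real.log ((2:ℝ) ^ (x / 2) + 2)
        ≤ Real.log ((2:ℝ) ^ (B / 2 + 2)) := Real.log_le_log (by positivity) hx3
      _ = (B / 2 + 2) * Real.log 2 := Real.log_rpow (by norm_num) _
      _ ≤ B / 2 + 2 := by
          have hB2pos : (0:ℝ) ≤ B / 2 + 2 := by linarith
          have := mul_le_mul_of_nonneg_left hlog2le hB2pos
          linarith
      _ ≤ c₂ * Lp := by
          rw [hc₂def, add_mul]
          linarith
  set T : ℝ := 2 * K * c₁ * (c₁ + 1) * c₂ ^ (1 + 3 * q) * ε⁻¹ * Lp ^ (3 + 3 * q) with hT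
  have hTpos : 0 < T := by rw [hT]; positivity
  have key : ∀ n ∈ Finset.range (⌊B⌋₊ + 1),
      ((2 : ℝ) ^ (-(n : ℝ) / 2) * B / ε) * Real.log (B / ε) *
        (C ((2 : ℝ) ^ (-(n : ℝ) / 2)) + C ((2 : ℝ) ^ (-((n : ℝ) - 1) / 2))) ≤ T := by
    intro n hn
    have hnB : (n : ℝ) ≤ B := by
      have h1 : n ≤ ⌊B⌋₊ := Nat.lt_succ_iff.mp (Finset.mem_range.mp hn)
      calc (n : ℝ) ≤ (⌊B⌋₊ : ℝ) := by exact_mod_cast h1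
        _ ≤ B := Nat.floor_le hBpos.le
    have hpow1 : (0:ℝ) < (2:ℝ) ^ (-(n : ℝ) / 2) := Real.rpow_pos_of_pos (by norm_num) _
    have hpow2 : (0:ℝ) < (2:ℝ) ^ (-((n : ℝ) - 1) / 2) := Real.rpow_pos_of_pos (by norm_num) _
    have hinv1 : ((2:ℝ) ^ (-(n : ℝ) / 2))⁻¹ = (2:ℝ) ^ ((n : ℝ) / 2) := by
      rw [neg_div, Real.rpow_neg (by norm_num), inv_inv]
    have hinv2 : ((2:ℝ) ^ (-((n : ℝ) - 1) / 2))⁻¹ = (2:ℝ) ^ (((n : ℝ) - 1) / 2) := by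
      rw [neg_div, Real.rpow_neg (by norm_num), inv_inv]
    have hlognn1 : 0 ≤ Real.log ((2:ℝ) ^ ((n:ℝ) / 2) + 2) := by
      apply Real.log_nonneg
      linarith [Real.rpow_pos_of_pos (show (0:ℝ) < 2 by norm_num) ((n:ℝ)/2)]
    have hlognn2 : 0 ≤ Real.log ((2:ℝ) ^ (((n:ℝ) - 1) / 2) + 2) := by
      apply Real.log_nonneg
      linarith [Real.rpow_pos_of_pos (show (0:ℝ) < 2 by norm_num) (((n:ℝ)-1)/2)]
    have h1 : C ((2 : ℝ) ^ (-(n : ℝ) / 2)) ≤ K * (2:ℝ) ^ ((n:ℝ) / 2) * (c₂ * Lp) ^ (1 + 3 * q) := by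
      calc C ((2 : ℝ) ^ (-(n : ℝ) / 2))
          ≤ K * ((2:ℝ) ^ (-(n : ℝ) / 2))⁻¹ *
            (Real.log (((2:ℝ) ^ (-(n : ℝ) / 2))⁻¹ + 2)) ^ (1 + 3 * q) := hC _ hpow1
        _ = K * (2:ℝ) ^ ((n:ℝ) / 2) * (Real.log ((2:ℝ) ^ ((n:ℝ) / 2) + 2)) ^ (1 + 3 * q) := by
            rw [hinv1]
        _ ≤ K * (2:ℝ) ^ ((n:ℝ) / 2) * (c₂ * Lp) ^ (1 + 3 * q) := by
            apply mul_le_mul_of_nonneg_left _ (by positivity)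
            exact pow_le_pow_left₀ hlognn1 (hlog_arg _ hnB) _
    have h2 : C ((2 : ℝ) ^ (-((n : ℝ) - 1) / 2)) ≤
        K * (2:ℝ) ^ (((n:ℝ) - 1) / 2) * (c₂ * Lp) ^ (1 + 3 * q) := by
      calc C ((2 : ℝ) ^ (-((n : ℝ) - 1) / 2))
          ≤ K * ((2:ℝ) ^ (-((n : ℝ) - 1) / 2))⁻¹ *
            (Real.log (((2:ℝ) ^ (-((n : ℝ) - 1) / 2))⁻¹ + 2)) ^ (1 + 3 * q) := hC _ hpow2
        _ = K * (2:ℝ) ^ (((n:ℝ) - 1) / 2) *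
            (Real.log ((2:ℝ) ^ (((n:ℝ) - 1) / 2) + 2)) ^ (1 + 3 * q) := by rw [hinv2]
        _ ≤ K * (2:ℝ) ^ (((n:ℝ) - 1) / 2) * (c₂ * Lp) ^ (1 + 3 * q) := by
            apply mul_le_mul_of_nonneg_left _ (by positivity)
            exact pow_le_pow_left₀ hlognn2 (hlog_arg _ (by linarith)) _
    have hmul1 : (2:ℝ) ^ (-(n : ℝ) / 2) * (2:ℝ) ^ ((n:ℝ) / 2) = 1 := by
      rw [← Real.rpow_add (by norm_num), show -(n:ℝ)/2 + (n:ℝ)/2 = 0 by ring, Real.rpow_zero]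
    have hmul2 : (2:ℝ) ^ (-(n : ℝ) / 2) * (2:ℝ) ^ (((n:ℝ) - 1) / 2) ≤ 1 := by
      rw [← Real.rpow_add (by norm_num)]
      apply Real.rpow_le_one_of_one_le_of_nonpos (by norm_num)
      linarith
    have hA : (2:ℝ) ^ (-(n : ℝ) / 2) *
        (C ((2 : ℝ) ^ (-(n : ℝ) / 2)) + C ((2 : ℝ) ^ (-((n : ℝ) - 1) / 2))) ≤
        2 * K * (c₂ * Lp) ^ (1 + 3 * q) := by
      have hKnn : (0:ℝ) ≤ K := by linarith
      have hcL : (0:ℝ) ≤ (c₂ * Lp) ^ (1 + 3 * q) := by positivity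
      calc (2:ℝ) ^ (-(n : ℝ) / 2) *
          (C ((2 : ℝ) ^ (-(n : ℝ) / 2)) + C ((2 : ℝ) ^ (-((n : ℝ) - 1) / 2)))
          ≤ (2:ℝ) ^ (-(n : ℝ) / 2) *
            (K * (2:ℝ) ^ ((n:ℝ) / 2) * (c₂ * Lp) ^ (1 + 3 * q) +
             K * (2:ℝ) ^ (((n:ℝ) - 1) / 2) * (c₂ * Lp) ^ (1 + 3 * q)) := by
            apply mul_le_mul_of_nonneg_left _ hpow1.le
            exact add_le_add h1 h2
        _ = ((2:ℝ) ^ (-(n : ℝ) / 2) * (2:ℝ) ^ ((n:ℝ) / 2) +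
             (2:ℝ) ^ (-(n : ℝ) / 2) * (2:ℝ) ^ (((n:ℝ) - 1) / 2)) *
            (K * (c₂ * Lp) ^ (1 + 3 * q)) := by ring
        _ ≤ (1 + 1) * (K * (c₂ * Lp) ^ (1 + 3 * q)) := by
            apply mul_le_mul_of_nonneg_right _ (by positivity)
            rw [hmul1]; linarith
        _ = 2 * K * (c₂ * Lp) ^ (1 + 3 * q) := by ring
    have hrw : ((2 : ℝ) ^ (-(n : ℝ) / 2) * B / ε) * Real.log (B / ε) *
        (C ((2 : ℝ) ^ (-(n : ℝ) / 2)) + C ((2 : ℝ) ^ (-((n : ℝ) - 1) / 2))) =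
        B * ε⁻¹ * Real.log (B / ε) *
        ((2 : ℝ) ^ (-(n : ℝ) / 2) *
          (C ((2 : ℝ) ^ (-(n : ℝ) / 2)) + C ((2 : ℝ) ^ (-((n : ℝ) - 1) / 2)))) := by
      field_simp
    rw [hrw]
    have hCsum : 0 ≤ C ((2 : ℝ) ^ (-(n : ℝ) / 2)) + C ((2 : ℝ) ^ (-((n : ℝ) - 1) / 2)) :=
      add_nonneg (hC0 _) (hC0 _)
    calc B * ε⁻¹ * Real.log (B / ε) *
        ((2 : ℝ) ^ (-(n : ℝ) / 2) *
          (C ((2 : ℝ) ^ (-(n : ℝ) / 2)) + C ((2 : ℝ) ^ (-((n : ℝ) - 1) / 2))))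
        ≤ (c₁ * Lp) * ε⁻¹ * ((c₁ + 1) * Lp) * (2 * K * (c₂ * Lp) ^ (1 + 3 * q)) := by
          have e1 : 0 ≤ ε⁻¹ := by positivity
          apply mul_le_mul (by apply mul_le_mul (by apply mul_le_mul hBle le_rfl e1 (by positivity)) hlogBε hlogBεpos.le (by positivity)) hA (by positivity) (by positivity)
      _ = T := by
          rw [hT, mul_pow]
          have : Lp ^ (3 + 3 * q) = Lp * Lp * Lp ^ (1 + 3 * q) := by
            rw [show 3 + 3 * q = 2 + (1 + 3 * q) by ring, pow_add]; ring
          rw [this]; ring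
  have hsum := Finset.sum_le_card_nsmul _ _ T key
  rw [Finset.card_range, nsmul_eq_mul] at hsum
  have hcard : ((⌊B⌋₊ + 1 : ℕ) : ℝ) ≤ (c₁ + 1) * Lp := by
    push_cast
    have h1 : (⌊B⌋₊ : ℝ) ≤ B := Nat.floor_le hBpos.le
    rw [add_mul, one_mul]
    linarith
  have hfinal : K * ∑ n ∈ Finset.range (⌊B⌋₊ + 1),
      ((2 : ℝ) ^ (-(n : ℝ) / 2) * B / ε) * Real.log (B / ε) *
        (C ((2 : ℝ) ^ (-(n : ℝ) / 2)) + C ((2 : ℝ) ^ (-((n : ℝ) - 1) / 2))) ≤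
      K * ((c₁ + 1) * Lp * T) := by
    apply mul_le_mul_of_nonneg_left _ (by linarith)
    calc (∑ n ∈ Finset.range (⌊B⌋₊ + 1),
        ((2 : ℝ) ^ (-(n : ℝ) / 2) * B / ε) * Real.log (B / ε) *
          (C ((2 : ℝ) ^ (-(n : ℝ) / 2)) + C ((2 : ℝ) ^ (-((n : ℝ) - 1) / 2))))
        ≤ ((⌊B⌋₊ + 1 : ℕ) : ℝ) * T := hsum
      _ ≤ (c₁ + 1) * Lp * T := mul_le_mul_of_nonneg_right hcard hTpos.le
  calc K * ∑ n ∈ Finset.range (⌊B⌋₊ + 1),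
      ((2 : ℝ) ^ (-(n : ℝ) / 2) * B / ε) * Real.log (B / ε) *
        (C ((2 : ℝ) ^ (-(n : ℝ) / 2)) + C ((2 : ℝ) ^ (-((n : ℝ) - 1) / 2)))
      ≤ K * ((c₁ + 1) * Lp * T) := hfinal
    _ = 2 * K ^ 2 * c₁ * (c₁ + 1) ^ 2 * c₂ ^ (1 + 3 * q) * ε⁻¹ * Lp ^ (3 * (q + 1) + 1) := by
        rw [hT]
        have : Lp ^ (3 * (q + 1) + 1) = Lp * Lp ^ (3 + 3 * q) := by
          rw [show 3 * (q + 1) + 1 = 1 + (3 + 3 * q) by ring, pow_add]; ring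
        rw [this]; ring
end
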